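/- arXiv:2306.07360 — 2 statements merged into one kernel-verified Lean document; each statement's English description precedes it below -/
import Mathlib

section
/- Let L be a complete modular lattice and 𝔪 a submonoid with zero of End_lin(L) that is closed under complements. The following are equivalent: (a) L is 𝔪-endoregular; (b) L is 𝔪-Rickart and satisfies the 𝔪-C2 condition; (c) L is dual-𝔪-Rickart and satisfies the 𝔪-D2 condition; (d) for every φ ∈ 𝔪, both ker_φ and φ(⊤) have a complement in L. -/
section Preamble

variable {α β : Type*}

/-- A linear morphism between complete lattices: there is a kernel element `k` such that
`φ x = φ (x ⊔ k)` for all `x`, and `φ` restricts to an isomorphism of (complete) lattices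
from the interval `[k, ⊤]` onto `[⊥, φ ⊤]`. -/
def IsLinMor [CompleteLattice α] [CompleteLattice β] (φ : α → β) : Prop :=
  ∃ k : α, (∀ x, φ x = φ (x ⊔ k)) ∧
    ∃ e : Set.Icc k (⊤ : α) ≃o Set.Icc (⊥ : β) (φ ⊤),
      ∀ x : Set.Icc k (⊤ : α), (e x : β) = φ (x : α)

/-- The kernel of a linear morphism: the largest element sent to `⊥`. -/
noncomputable def linKer [CompleteLattice α] [CompleteLattice β] (φ : α → β) : α :=
  sSup {a | φ a = ⊥}

/-- A submonoid with zero of the monoid of linear endomorphisms of `α`. -/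
structure IsLinSubmonoid [CompleteLattice α] (M : Set (α → α)) : Prop where
  lin_mem : ∀ φ ∈ M, IsLinMor φ
  id_mem : (id : α → α) ∈ M
  zero_mem : (fun _ : α => (⊥ : α)) ∈ M
  comp_mem : ∀ φ ∈ M, ∀ ψ ∈ M, φ ∘ ψ ∈ M

/-- The projection onto `x` along a complement `x'`. -/
def proj [CompleteLattice α] (x x' : α) : α → α := fun a => (a ⊔ x') ⊓ x

/-- `M` is closed under complements: whenever `φ ∈ M` restricts to a linear isomorphism
`[⊥, x] → [⊥, y]` with `x, y` complemented, the composite `ι_x ∘ (φ|_x)⁻¹ ∘ π_y` is in `M`. -/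
def ClosedUnderComplements [CompleteLattice α] (M : Set (α → α)) : Prop :=
  ∀ φ ∈ M, ∀ x x' y y' : α, IsCompl x x' → IsCompl y y' →
    ∀ e : Set.Icc (⊥ : α) x ≃o Set.Icc (⊥ : α) y,
      (∀ a : Set.Icc (⊥ : α) x, ((e a : Set.Icc (⊥ : α) y) : α) = φ (a : α)) →
      (fun a : α =>
        ((e.symm ⟨(a ⊔ y') ⊓ y, bot_le, inf_le_right⟩ : Set.Icc (⊥ : α) x) : α)) ∈ M

/-- `L` is `M`-endoregular: `M` is a regular monoid. -/
def MEndoregular [CompleteLattice α] (M : Set (α → α)) : Prop :=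
  ∀ φ ∈ M, ∃ ψ ∈ M, φ ∘ ψ ∘ φ = φ

/-- `L` is `M`-Rickart: kernels of members of `M` have complements. -/
def MRickart [CompleteLattice α] (M : Set (α → α)) : Prop :=
  ∀ φ ∈ M, ∃ y, IsCompl (linKer φ) y

/-- `L` is dual-`M`-Rickart: images of members of `M` have complements. -/
def MDualRickart [CompleteLattice α] (M : Set (α → α)) : Prop :=
  ∀ φ ∈ M, ∃ y, IsCompl (φ ⊤) y

/-- The `M`-C2 condition. -/
def MC2 [CompleteLattice α] (M : Set (α → α)) : Prop :=
  ∀ a x x' : α, IsCompl x x' →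
    ∀ e : Set.Icc (⊥ : α) x ≃o Set.Icc (⊥ : α) a,
      ((fun b : α =>
          ((e ⟨(b ⊔ x') ⊓ x, bot_le, inf_le_right⟩ : Set.Icc (⊥ : α) a) : α)) ∈ M) →
      ∃ a', IsCompl a a'

/-- The `M`-D2 condition. -/
def MD2 [CompleteLattice α] (M : Set (α → α)) : Prop :=
  ∀ a x : α, (∃ x', IsCompl x x') →
    ∀ e : Set.Icc a (⊤ : α) ≃o Set.Icc (⊥ : α) x,
      ((fun b : α => ((e ⟨a ⊔ b, le_sup_left, le_top⟩ : Set.Icc (⊥ : α) x) : α)) ∈ M) →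
      ∃ a', IsCompl a a'

/-- `L` is `M`-abelian: every idempotent of `M` is central in `M`. -/
def MAbelian [CompleteLattice α] (M : Set (α → α)) : Prop :=
  ∀ ε ∈ M, ε ∘ ε = ε → ∀ φ ∈ M, ε ∘ φ = φ ∘ ε

/-- `a` is `M`-`L`-generated: it is a join of images of linear morphisms `L → [⊥, a]`
whose composites with the inclusion `ι_a` lie in `M`. -/
def MGenerated [CompleteLattice α] (M : Set (α → α)) (a : α) : Prop :=
  ∃ S : Set (α → α), S ⊆ M ∧ (∀ f ∈ S, ∀ x, f x ≤ a) ∧ (⨆ f ∈ S, f ⊤) = a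

/-- A complete lattice is compact if every join representation of `⊤` has a finite subjoin. -/
def CompactLat (α : Type*) [CompleteLattice α] : Prop :=
  ∀ s : Set α, sSup s = ⊤ → ∃ t : Finset α, ↑t ⊆ s ∧ sSup (↑t : Set α) = ⊤

/-- An element `c` is compact if the interval `[⊥, c]` is a compact lattice. -/
def CompactElt [CompleteLattice α] (c : α) : Prop :=
  ∀ s : Set α, (∀ a ∈ s, a ≤ c) → sSup s = c →
    ∃ t : Finset α, ↑t ⊆ s ∧ sSup (↑t : Set α) = c

/-- `x` is essential in `L`. -/
def Essential [CompleteLattice α] (x : α) : Prop := ∀ y, x ⊓ y = ⊥ → y = ⊥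

/-- `x` is essential in the interval `[⊥, c]`. -/
def EssentialIn [CompleteLattice α] (x c : α) : Prop :=
  x ≤ c ∧ ∀ y ≤ c, x ⊓ y = ⊥ → y = ⊥

/-- `x` is superfluous in `L`. -/
def Superfluous [CompleteLattice α] (x : α) : Prop := ∀ y, x ⊔ y = ⊤ → y = ⊤

/-- `x` is superfluous in the interval `[⊥, c]`. -/
def SuperfluousIn [CompleteLattice α] (x c : α) : Prop :=
  x ≤ c ∧ ∀ y ≤ c, x ⊔ y = c → y = c

/-- `M` contains all the projections. -/
def ContainsProjections [CompleteLattice α] (M : Set (α → α)) : Prop :=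
  ∀ x x' : α, IsCompl x x' → proj x x' ∈ M

/-- `L` is `M`-K-extending. -/
def MKExtending [CompleteLattice α] (M : Set (α → α)) : Prop :=
  ∀ φ ∈ M, ∃ c : α, (∃ c', IsCompl c c') ∧ EssentialIn (linKer φ) c

/-- `L` is `M`-K-nonsingular. -/
def MKNonsingular [CompleteLattice α] (M : Set (α → α)) : Prop :=
  ∀ φ ∈ M, Essential (linKer φ) → φ = fun _ => (⊥ : α)

/-- `L` is `M`-T-lifting. -/
def MTLifting [CompleteLattice α] (M : Set (α → α)) : Prop :=
  ∀ φ ∈ M, ∃ c c' : α, IsCompl c c' ∧ c ≤ φ ⊤ ∧ SuperfluousIn (φ ⊤ ⊓ c') c'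

end Preamble

section Aux

variable {α : Type*} [CompleteLattice α]

/-- The basic spec of a linear morphism, stated with `linKer`. -/
theorem linMor_spec {φ : α → α} (hφ : IsLinMor φ) :
    (∀ x, φ x = φ (x ⊔ linKer φ)) ∧ (∀ a, φ a = ⊥ ↔ a ≤ linKer φ) ∧
    ∃ e : Set.Icc (linKer φ) (⊤ : α) ≃o Set.Icc (⊥ : α) (φ ⊤),
      ∀ x : Set.Icc (linKer φ) (⊤ : α), (e x : α) = φ (x : α) := by
  obtain ⟨k, hk, e, he⟩ := hφ
  have hbot : φ k = ⊥ := by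
    have h1 : e ⟨k, le_rfl, le_top⟩ ≤ e (e.symm ⟨⊥, le_rfl, bot_le⟩) :=
      e.monotone (e.symm ⟨⊥, le_rfl, bot_le⟩).2.1
    rw [e.apply_symm_apply] at h1
    have h2 : (e ⟨k, le_rfl, le_top⟩ : α) ≤ ⊥ := h1
    rw [he ⟨k, le_rfl, le_top⟩] at h2
    exact le_bot_iff.mp h2
  have hiff : ∀ a, φ a = ⊥ ↔ a ≤ k := by
    intro a
    constructor
    · intro ha
      have h2 : e ⟨a ⊔ k, le_sup_right, le_top⟩ = e ⟨k, le_rfl, le_top⟩ := by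
        apply Subtype.ext
        rw [he ⟨a ⊔ k, le_sup_right, le_top⟩, he ⟨k, le_rfl, le_top⟩]
        show φ (a ⊔ k) = φ k
        rw [← hk a, ha, hbot]
      have h3 := congrArg Subtype.val (e.injective h2)
      exact sup_eq_right.mp h3
    · intro ha
      rw [hk a, sup_eq_right.mpr ha, hbot]
  have hker : linKer φ = k := by
    have hset : {a : α | φ a = ⊥} = Set.Iic k := by
      ext a; exact hiff a
    rw [linKer, hset, csSup_Iic]
  rw [hker]
  exact ⟨hk, hiff, e, he⟩

theorem linMor_mono {φ : α → α} (hφ : IsLinMor φ) : Monotone φ := by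
  obtain ⟨hk, _, e, he⟩ := linMor_spec hφ
  intro a b hab
  rw [hk a, hk b]
  have h1 : (⟨a ⊔ linKer φ, le_sup_right, le_top⟩ : Set.Icc (linKer φ) (⊤ : α)) ≤
      ⟨b ⊔ linKer φ, le_sup_right, le_top⟩ := sup_le_sup_right hab _
  have h2 := e.monotone h1
  rw [← he ⟨a ⊔ linKer φ, le_sup_right, le_top⟩, ← he ⟨b ⊔ linKer φ, le_sup_right, le_top⟩]
  exact h2

theorem linMor_bot {φ : α → α} (hφ : IsLinMor φ) : φ ⊥ = ⊥ :=
  (linMor_spec hφ).2.1 ⊥ |>.mpr bot_le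

/-- An idempotent linear endomorphism has complementary kernel and image. -/
theorem idem_isCompl {ε : α → α} (hε : IsLinMor ε) (hi : ∀ x, ε (ε x) = ε x) :
    IsCompl (linKer ε) (ε ⊤) := by
  obtain ⟨hk, hiff, e, he⟩ := linMor_spec hε
  have hfix : ∀ a, a ≤ ε ⊤ → ε a = a := by
    intro a ha
    have h1 : a = ε ((e.symm ⟨a, bot_le, ha⟩ : Set.Icc (linKer ε) (⊤ : α)) : α) := by
      have h0 := he (e.symm ⟨a, bot_le, ha⟩)
      rw [e.apply_symm_apply] at h0
      exact h0
    rw [h1, hi]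
  apply IsCompl.of_eq
  · have h1 : ε (linKer ε ⊓ ε ⊤) = ⊥ := (hiff _).mpr inf_le_left
    have h2 : ε (linKer ε ⊓ ε ⊤) = linKer ε ⊓ ε ⊤ := hfix _ inf_le_right
    rw [h2] at h1; exact h1
  · have hmono := linMor_mono hε
    have h1 : ε (linKer ε ⊔ ε ⊤) = ε ⊤ := by
      apply le_antisymm (hmono le_top)
      calc ε ⊤ = ε (ε ⊤) := (hi ⊤).symm
        _ ≤ ε (linKer ε ⊔ ε ⊤) := hmono le_sup_right
    have h2 : e ⟨linKer ε ⊔ ε ⊤, le_sup_left, le_top⟩ = e ⟨⊤, le_top, le_rfl⟩ := by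
      apply Subtype.ext
      rw [he, he]
      exact h1
    have := congrArg Subtype.val (e.injective h2)
    simpa using this

end Aux

section CompIso

variable {α : Type*} [Lattice α] [BoundedOrder α] [IsModularLattice α]

/-- In a modular lattice, a complement pair gives `[⊥, k'] ≃o [k, ⊤]` via `x ↦ x ⊔ k`. -/
def compIso {k k' : α} (h : IsCompl k k') : Set.Icc (⊥ : α) k' ≃o Set.Icc k (⊤ : α) where
  toFun x := ⟨(x : α) ⊔ k, le_sup_right, le_top⟩
  invFun y := ⟨(y : α) ⊓ k', bot_le, inf_le_right⟩
  left_inv x := Subtype.ext (by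
    show ((x : α) ⊔ k) ⊓ k' = x
    rw [sup_inf_assoc_of_le _ x.2.2, h.inf_eq_bot, sup_bot_eq])
  right_inv y := Subtype.ext (by
    show (y : α) ⊓ k' ⊔ k = y
    rw [inf_sup_assoc_of_le _ y.2.1, sup_comm, h.sup_eq_top, inf_top_eq])
  map_rel_iff' := by
    intro x y
    constructor
    · intro hle
      have h1 : ((x : α) ⊔ k) ⊓ k' ≤ ((y : α) ⊔ k) ⊓ k' :=
        inf_le_inf_right _ (by exact_mod_cast hle)
      rw [sup_inf_assoc_of_le _ x.2.2, h.inf_eq_bot, sup_bot_eq,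
        sup_inf_assoc_of_le _ y.2.2, h.inf_eq_bot, sup_bot_eq] at h1
      exact h1
    · intro hle
      exact sup_le_sup_right (α := α) hle k

theorem compIso_apply {k k' : α} (h : IsCompl k k') (x : Set.Icc (⊥ : α) k') :
    (compIso h x : α) = (x : α) ⊔ k := rfl

end CompIso

theorem linMor_proj {α : Type*} [CompleteLattice α] [IsModularLattice α] {φ : α → α}
    (hφ : IsLinMor φ) {k' : α} (hk' : IsCompl (linKer φ) k') (a : α) :
    φ ((a ⊔ linKer φ) ⊓ k') = φ a := by
  obtain ⟨hk, -, -⟩ := linMor_spec hφ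
  rw [hk ((a ⊔ linKer φ) ⊓ k'), inf_sup_assoc_of_le _ le_sup_right, sup_comm k',
    hk'.sup_eq_top, inf_top_eq]
  exact (hk a).symm

/-- For a submonoid with zero `M ⊆ End_lin(L)` closed under complements, the
conditions (a) `M`-endoregular, (b) `M`-Rickart + `M`-C2, (c) dual-`M`-Rickart + `M`-D2 and
(d) kernels and images of members of `M` are complemented, are all equivalent. -/
theorem stmt_3 {α : Type*} [CompleteLattice α] [IsModularLattice α]
    (M : Set (α → α)) (hM : IsLinSubmonoid M) (hcc : ClosedUnderComplements M) :
    (MEndoregular M ↔ MRickart M ∧ MC2 M) ∧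
    (MEndoregular M ↔ MDualRickart M ∧ MD2 M) ∧
    (MEndoregular M ↔
      ∀ φ ∈ M, (∃ k', IsCompl (linKer φ) k') ∧ (∃ i', IsCompl (φ ⊤) i')) := by
  -- (d) → (a)
  have hd_reg : (∀ φ ∈ M, (∃ k', IsCompl (linKer φ) k') ∧ (∃ i', IsCompl (φ ⊤) i')) →
      MEndoregular M := by
    intro hd φ hφM
    obtain ⟨⟨k', hk'⟩, ⟨i', hi'⟩⟩ := hd φ hφM
    have hφlin := hM.lin_mem φ hφM
    obtain ⟨hk, hiff, e, he⟩ := linMor_spec hφlin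
    have hmono := linMor_mono hφlin
    let e' : Set.Icc (⊥ : α) k' ≃o Set.Icc (⊥ : α) (φ ⊤) := (compIso hk').trans e
    have he' : ∀ a : Set.Icc (⊥ : α) k', ((e' a : Set.Icc (⊥ : α) (φ ⊤)) : α) = φ (a : α) := by
      intro a
      show (e (compIso hk' a) : α) = φ (a : α)
      rw [he (compIso hk' a)]
      show φ ((a : α) ⊔ linKer φ) = φ (a : α)
      exact (hk (a : α)).symm
    have hψM := hcc φ hφM k' (linKer φ) (φ ⊤) i' hk'.symm hi' e' he'
    refine ⟨_, hψM, ?_⟩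
    funext a
    show φ ((e'.symm ⟨(φ a ⊔ i') ⊓ φ ⊤, bot_le, inf_le_right⟩ : Set.Icc (⊥ : α) k') : α) = φ a
    have h2 : e'.symm ⟨(φ a ⊔ i') ⊓ φ ⊤, bot_le, inf_le_right⟩
        = ⟨(a ⊔ linKer φ) ⊓ k', bot_le, inf_le_right⟩ := by
      rw [OrderIso.symm_apply_eq]
      apply Subtype.ext
      show (φ a ⊔ i') ⊓ φ ⊤ = ((e' ⟨(a ⊔ linKer φ) ⊓ k', bot_le, inf_le_right⟩ :
        Set.Icc (⊥ : α) (φ ⊤)) : α)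
      rw [he' ⟨(a ⊔ linKer φ) ⊓ k', bot_le, inf_le_right⟩]
      show (φ a ⊔ i') ⊓ φ ⊤ = φ ((a ⊔ linKer φ) ⊓ k')
      rw [linMor_proj hφlin hk', sup_inf_assoc_of_le _ (hmono le_top),
        hi'.symm.inf_eq_bot, sup_bot_eq]
    rw [h2]
    exact linMor_proj hφlin hk' a
  -- (a) → (d)
  have hreg_d : MEndoregular M →
      ∀ φ ∈ M, (∃ k', IsCompl (linKer φ) k') ∧ (∃ i', IsCompl (φ ⊤) i') := by
    intro hreg φ hφM
    obtain ⟨ψ, hψM, hψ⟩ := hreg φ hφM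
    have hψφM : ψ ∘ φ ∈ M := hM.comp_mem ψ hψM φ hφM
    have hφψM : φ ∘ ψ ∈ M := hM.comp_mem φ hφM ψ hψM
    have hφlin := hM.lin_mem φ hφM
    have hψlin := hM.lin_mem ψ hψM
    have hφψφ : ∀ x, φ (ψ (φ x)) = φ x := fun x => congrFun hψ x
    have hidem1 : ∀ x, (ψ ∘ φ) ((ψ ∘ φ) x) = (ψ ∘ φ) x := by
      intro x
      show ψ (φ (ψ (φ x))) = ψ (φ x)
      rw [hφψφ x]
    have hidem2 : ∀ x, (φ ∘ ψ) ((φ ∘ ψ) x) = (φ ∘ ψ) x := by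
      intro x
      exact hφψφ (ψ x)
    have hc1 := idem_isCompl (hM.lin_mem _ hψφM) hidem1
    have hc2 := idem_isCompl (hM.lin_mem _ hφψM) hidem2
    constructor
    · have hset : {a : α | φ a = ⊥} = {a : α | (ψ ∘ φ) a = ⊥} := by
        ext a
        simp only [Set.mem_setOf_eq, Function.comp_apply]
        constructor
        · intro h; rw [h]; exact linMor_bot hψlin
        · intro h
          rw [← hφψφ a, h]
          exact linMor_bot hφlin
      have hkeq : linKer φ = linKer (ψ ∘ φ) := by rw [linKer, linKer, hset]
      exact ⟨(ψ ∘ φ) ⊤, hkeq ▸ hc1⟩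
    · have him : φ ⊤ = (φ ∘ ψ) ⊤ := by
        apply le_antisymm
        · calc φ ⊤ = φ (ψ (φ ⊤)) := (hφψφ ⊤).symm
            _ ≤ φ (ψ ⊤) := linMor_mono hφlin (linMor_mono hψlin le_top)
        · exact linMor_mono hφlin le_top
      exact ⟨linKer (φ ∘ ψ), him ▸ hc2.symm⟩
  -- MC2 from regularity
  have hreg_c2 : MEndoregular M → MC2 M := by
    intro hreg a x x' hx e hmem
    have htop : ((e ⟨((⊤ : α) ⊔ x') ⊓ x, bot_le, inf_le_right⟩ : Set.Icc (⊥ : α) a) : α) = a := by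
      have h1 : (⟨(⊤ ⊔ x') ⊓ x, bot_le, inf_le_right⟩ : Set.Icc (⊥ : α) x)
          = ⟨x, bot_le, le_rfl⟩ := Subtype.ext (by simp)
      rw [h1]
      refine le_antisymm (e ⟨x, bot_le, le_rfl⟩).2.2 ?_
      have h2 : e.symm ⟨a, bot_le, le_rfl⟩ ≤ (⟨x, bot_le, le_rfl⟩ : Set.Icc (⊥ : α) x) :=
        (e.symm ⟨a, bot_le, le_rfl⟩).2.2
      have h3 := e.monotone h2
      rw [e.apply_symm_apply] at h3
      exact h3
    obtain ⟨-, i', hi'⟩ := hreg_d hreg _ hmem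
    rw [htop] at hi'
    exact ⟨i', hi'⟩
  -- MD2 from regularity
  have hreg_d2 : MEndoregular M → MD2 M := by
    intro hreg a x hx e hmem
    set φ : α → α := fun b : α =>
      ((e ⟨a ⊔ b, le_sup_left, le_top⟩ : Set.Icc (⊥ : α) x) : α) with hφdef
    have hbot : ((e ⟨a, le_rfl, le_top⟩ : Set.Icc (⊥ : α) x) : α) = ⊥ := by
      have h1 : e ⟨a, le_rfl, le_top⟩ ≤ e (e.symm ⟨⊥, le_rfl, bot_le⟩) :=
        e.monotone (e.symm ⟨⊥, le_rfl, bot_le⟩).2.1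
      rw [e.apply_symm_apply] at h1
      exact le_bot_iff.mp h1
    have hiff : ∀ b, φ b = ⊥ ↔ b ≤ a := by
      intro b
      constructor
      · intro h
        have h2 : e ⟨a ⊔ b, le_sup_left, le_top⟩ = e ⟨a, le_rfl, le_top⟩ :=
          Subtype.ext (by rw [hbot]; exact h)
        have := congrArg Subtype.val (e.injective h2)
        exact sup_le_iff.mp (le_of_eq this) |>.2
      · intro h
        have h2 : (⟨a ⊔ b, le_sup_left, le_top⟩ : Set.Icc a (⊤ : α))
            = ⟨a, le_rfl, le_top⟩ := Subtype.ext (sup_eq_left.mpr h)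
        show ((e ⟨a ⊔ b, le_sup_left, le_top⟩ : Set.Icc (⊥ : α) x) : α) = ⊥
        rw [h2, hbot]
    have hker : linKer φ = a := by
      have hset : {b : α | φ b = ⊥} = Set.Iic a := by
        ext b; exact hiff b
      rw [linKer, hset, csSup_Iic]
    obtain ⟨⟨k', hk'⟩, -⟩ := hreg_d hreg φ hmem
    rw [hker] at hk'
    exact ⟨k', hk'⟩
  refine ⟨⟨fun hreg => ⟨fun φ h => (hreg_d hreg φ h).1, hreg_c2 hreg⟩, ?_⟩,
    ⟨fun hreg => ⟨fun φ h => (hreg_d hreg φ h).2, hreg_d2 hreg⟩, ?_⟩,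
    hreg_d, hd_reg⟩
  · -- (b) → (a)
    rintro ⟨hrick, hc2⟩
    apply hd_reg
    intro φ hφM
    obtain ⟨k', hk'⟩ := hrick φ hφM
    have hφlin := hM.lin_mem φ hφM
    obtain ⟨hk, hiff, e, he⟩ := linMor_spec hφlin
    refine ⟨⟨k', hk'⟩, ?_⟩
    let e' : Set.Icc (⊥ : α) k' ≃o Set.Icc (⊥ : α) (φ ⊤) := (compIso hk').trans e
    have he' : ∀ b : Set.Icc (⊥ : α) k', ((e' b : Set.Icc (⊥ : α) (φ ⊤)) : α) = φ (b : α) := by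
      intro b
      show (e (compIso hk' b) : α) = φ (b : α)
      rw [he (compIso hk' b)]
      show φ ((b : α) ⊔ linKer φ) = φ (b : α)
      exact (hk (b : α)).symm
    apply hc2 (φ ⊤) k' (linKer φ) hk'.symm e'
    have heq : (fun b : α =>
        ((e' ⟨(b ⊔ linKer φ) ⊓ k', bot_le, inf_le_right⟩ : Set.Icc (⊥ : α) (φ ⊤)) : α)) = φ := by
      funext b
      rw [he' ⟨(b ⊔ linKer φ) ⊓ k', bot_le, inf_le_right⟩]
      exact linMor_proj hφlin hk' b
    rw [heq]
    exact hφM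
  · -- (c) → (a)
    rintro ⟨hdr, hd2⟩
    apply hd_reg
    intro φ hφM
    obtain ⟨i', hi'⟩ := hdr φ hφM
    have hφlin := hM.lin_mem φ hφM
    obtain ⟨hk, hiff, e, he⟩ := linMor_spec hφlin
    refine ⟨?_, ⟨i', hi'⟩⟩
    apply hd2 (linKer φ) (φ ⊤) ⟨i', hi'⟩ e
    have heq : (fun b : α =>
        ((e ⟨linKer φ ⊔ b, le_sup_left, le_top⟩ : Set.Icc (⊥ : α) (φ ⊤)) : α)) = φ := by
      funext b
      rw [he ⟨linKer φ ⊔ b, le_sup_left, le_top⟩]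
      show φ (linKer φ ⊔ b) = φ b
      rw [sup_comm]
      exact (hk b).symm
    rw [heq]
    exact hφM
end

section
/- Let L be a complete modular lattice and 𝔪 a submonoid with zero of End_lin(L) that is closed under complements. The following are equivalent: (a) L is 𝔪-Rickart, dual-𝔪-Rickart, and 𝔪-abelian; (b) for every φ ∈ 𝔪, ker_φ ⊓ φ(⊤) = ⊥ and ker_φ ⊔ φ(⊤) = ⊤ (i.e., φ(⊤) is a complement of ker_φ). -/
section MyAux
variable {α : Type*} [CompleteLattice α]

theorem linmor_props {φ : α → α} (h : IsLinMor φ) :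
    Monotone φ ∧ (∀ a, φ a = ⊥ ↔ a ≤ linKer φ) ∧
      (∀ x, φ x = φ (x ⊔ linKer φ)) ∧
      (∀ a b, φ (a ⊔ b) = φ a ⊔ φ b) ∧
      (∀ a b, linKer φ ≤ a → linKer φ ≤ b → φ a = φ b → a = b) ∧
      (∀ c, c ≤ φ ⊤ → ∃ z, φ z = c) := by
  obtain ⟨k, hk, e, he⟩ := h
  have hmono : Monotone φ := by
    intro x y hxy
    have h1 : (⟨x ⊔ k, le_sup_right, le_top⟩ : Set.Icc k (⊤:α)) ≤ ⟨y ⊔ k, le_sup_right, le_top⟩ :=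
      sup_le_sup_right hxy k
    have h2 := e.monotone h1
    rw [← Subtype.coe_le_coe] at h2
    rw [he, he] at h2
    calc φ x = φ (x ⊔ k) := hk x
    _ ≤ φ (y ⊔ k) := h2
    _ = φ y := (hk y).symm
  have hφk : φ k = ⊥ := by
    have hbm : (⊥:α) ∈ Set.Icc (⊥:α) (φ ⊤) := ⟨le_rfl, bot_le⟩
    have h1 : (⟨k, le_rfl, le_top⟩ : Set.Icc k (⊤:α)) ≤ e.symm ⟨⊥, hbm⟩ :=
      Subtype.coe_le_coe.mp (e.symm ⟨⊥, hbm⟩).2.1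
    have h2 := e.monotone h1
    rw [e.apply_symm_apply, ← Subtype.coe_le_coe, he] at h2
    exact le_bot_iff.mp h2
  have hker : ∀ a, φ a = ⊥ ↔ a ≤ k := by
    intro a
    constructor
    · intro ha
      have h1 : φ (a ⊔ k) = φ k := by rw [← hk a, ha, hφk]
      have h2 : (⟨a ⊔ k, le_sup_right, le_top⟩ : Set.Icc k (⊤:α)) = ⟨k, le_rfl, le_top⟩ := by
        apply e.injective
        apply Subtype.ext
        rw [he, he]
        exact h1
      have h3 : a ⊔ k = k := congrArg Subtype.val h2
      exact le_sup_left.trans h3.le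
    · intro ha
      rw [hk a, sup_eq_right.mpr ha, hφk]
  have hkerk : linKer φ = k := by
    apply le_antisymm
    · exact sSup_le fun a ha => (hker a).mp ha
    · exact le_sSup ((hker k).mpr le_rfl)
  have hinj : ∀ a b, linKer φ ≤ a → linKer φ ≤ b → φ a = φ b → a = b := by
    intro a b ha hb hab
    rw [hkerk] at ha hb
    have h2 : (⟨a, ha, le_top⟩ : Set.Icc k (⊤:α)) = ⟨b, hb, le_top⟩ := by
      apply e.injective; apply Subtype.ext; rw [he, he]; exact hab
    exact congrArg Subtype.val h2
  have hsurj : ∀ c, c ≤ φ ⊤ → ∃ z, φ z = c := by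
    intro c hc
    refine ⟨(e.symm ⟨c, bot_le, hc⟩ : Set.Icc k (⊤:α)), ?_⟩
    have := he (e.symm ⟨c, bot_le, hc⟩)
    rw [e.apply_symm_apply] at this
    exact this.symm
  have hsup : ∀ a b, φ (a ⊔ b) = φ a ⊔ φ b := by
    intro a b
    apply le_antisymm _ (sup_le (hmono le_sup_left) (hmono le_sup_right))
    have hc : φ a ⊔ φ b ≤ φ ⊤ := sup_le (hmono le_top) (hmono le_top)
    set z : Set.Icc k (⊤:α) := e.symm ⟨φ a ⊔ φ b, bot_le, hc⟩ with hz
    have hφz : φ (z : α) = φ a ⊔ φ b := by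
      have := he z
      rw [hz, e.apply_symm_apply] at this
      exact this.symm
    have key : ∀ w : α, φ w ≤ φ a ⊔ φ b → w ≤ (z : α) := by
      intro w hw
      have h1 : (⟨w ⊔ k, le_sup_right, le_top⟩ : Set.Icc k (⊤:α)) ≤ z := by
        rw [← e.le_iff_le, ← Subtype.coe_le_coe, he, hz, e.apply_symm_apply, ← hk w]
        exact hw
      exact le_trans le_sup_left (Subtype.coe_le_coe.mpr h1)
    have haz := key a le_sup_left
    have hbz := key b le_sup_right
    calc φ (a ⊔ b) ≤ φ (z : α) := hmono (sup_le haz hbz)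
    _ = φ a ⊔ φ b := hφz
  exact ⟨hmono, fun a => hkerk ▸ hker a, fun x => by rw [hkerk]; exact hk x, hsup, hinj, hsurj⟩


theorem proj_mem' {M : Set (α → α)} (hM : IsLinSubmonoid M) (hcc : ClosedUnderComplements M)
    {x x' : α} (h : IsCompl x x') : proj x x' ∈ M := by
  exact hcc id hM.id_mem x x' x x' h h (OrderIso.refl _) (fun a => rfl)

theorem proj_idem [IsModularLattice α] {x x' : α} (h : IsCompl x x') :
    proj x x' ∘ proj x x' = proj x x' := by
  funext a
  show ((((a ⊔ x') ⊓ x) ⊔ x') ⊓ x) = (a ⊔ x') ⊓ x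
  rw [sup_inf_assoc_of_le x' (inf_le_right : (a ⊔ x') ⊓ x ≤ x), h.symm.inf_eq_bot, sup_bot_eq]

theorem proj_mono {x x' : α} : Monotone (proj x x') :=
  fun _ _ hab => inf_le_inf_right x (sup_le_sup_right hab x')

theorem phi_proj_le [IsModularLattice α] {M : Set (α → α)} (hM : IsLinSubmonoid M)
    (hcc : ClosedUnderComplements M)
    (hb : ∀ ψ ∈ M, linKer ψ ⊓ ψ ⊤ = ⊥ ∧ linKer ψ ⊔ ψ ⊤ = ⊤)
    {φ : α → α} (hφ : φ ∈ M) {x x' : α} (hx : IsCompl x x') (a : α) :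
    φ (proj x x' a) ≤ x := by
  obtain ⟨hmono, hker, -, -, -, -⟩ := linmor_props (hM.lin_mem φ hφ)
  have hφbot : φ ⊥ = ⊥ := (hker ⊥).mpr bot_le
  have hεm : proj x x' ∈ M := proj_mem' hM hcc hx
  have hε'm : proj x' x ∈ M := proj_mem' hM hcc hx.symm
  have hψm : proj x' x ∘ (φ ∘ proj x x') ∈ M :=
    hM.comp_mem _ hε'm _ (hM.comp_mem _ hφ _ hεm)
  set ψ := proj x' x ∘ (φ ∘ proj x x') with hψ
  have hψx' : ψ x' = ⊥ := by
    show ((φ ((x' ⊔ x') ⊓ x)) ⊔ x) ⊓ x' = ⊥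
    rw [sup_idem, hx.symm.inf_eq_bot, hφbot, bot_sup_eq, hx.inf_eq_bot]
  have hx'ker : x' ≤ linKer ψ := le_sSup hψx'
  have hψtop : ψ ⊤ = ⊥ := by
    have h1 : ψ ⊤ ≤ x' := inf_le_right
    have h2 : ψ ⊤ ≤ linKer ψ ⊓ ψ ⊤ := le_inf (h1.trans hx'ker) le_rfl
    rw [(hb ψ hψm).1] at h2
    exact le_bot_iff.mp h2
  have hψa : ψ a = ⊥ := by
    have : ψ a ≤ ψ ⊤ := proj_mono (hmono (proj_mono le_top))
    rw [hψtop] at this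
    exact le_bot_iff.mp this
  have hψa' : (φ (proj x x' a) ⊔ x) ⊓ x' = ⊥ := hψa
  have hd : (x ⊔ x') ⊓ (φ (proj x x' a) ⊔ x) =
      x ⊔ (x' ⊓ (φ (proj x x' a) ⊔ x)) :=
    sup_inf_assoc_of_le x' (le_sup_right : x ≤ φ (proj x x' a) ⊔ x)
  rw [hx.sup_eq_top, top_inf_eq, inf_comm x' _, hψa', sup_bot_eq] at hd
  exact le_sup_left.trans hd.le

end MyAux

/-- `L` is `M`-Rickart, dual-`M`-Rickart and `M`-abelian iff for every `φ ∈ M`,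
`φ ⊤` is a complement of `ker_φ`. -/
theorem stmt_9 {α : Type*} [CompleteLattice α] [IsModularLattice α]
    (M : Set (α → α)) (hM : IsLinSubmonoid M) (hcc : ClosedUnderComplements M) :
    (MRickart M ∧ MDualRickart M ∧ MAbelian M) ↔
      (∀ φ ∈ M, linKer φ ⊓ φ ⊤ = ⊥ ∧ linKer φ ⊔ φ ⊤ = ⊤) := by
  constructor
  · rintro ⟨hR, hD, hA⟩ φ hφ
    obtain ⟨hmono, hker, -, -, -, -⟩ := linmor_props (hM.lin_mem φ hφ)
    have hφbot : φ ⊥ = ⊥ := (hker ⊥).mpr bot_le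
    have hφk : φ (linKer φ) = ⊥ := (hker (linKer φ)).mpr le_rfl
    obtain ⟨k', hk'⟩ := hR φ hφ
    obtain ⟨i', hi'⟩ := hD φ hφ
    have hcomm1 := hA (proj (linKer φ) k') (proj_mem' hM hcc hk') (proj_idem hk') φ hφ
    have hcomm2 := hA (proj (φ ⊤) i') (proj_mem' hM hcc hi') (proj_idem hi') φ hφ
    constructor
    · have h1 := congrFun hcomm1 ⊤
      have h2 : ((φ ⊤ ⊔ k') ⊓ linKer φ) = φ ((⊤ ⊔ k') ⊓ linKer φ) := h1
      rw [top_sup_eq, top_inf_eq, hφk] at h2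
      apply le_bot_iff.mp
      calc linKer φ ⊓ φ ⊤ ≤ (φ ⊤ ⊔ k') ⊓ linKer φ :=
            le_inf (inf_le_right.trans le_sup_left) inf_le_left
      _ = ⊥ := h2
      _ ≤ ⊥ := le_rfl
    · have h1 := congrFun hcomm2 i'
      have h2 : ((φ i' ⊔ i') ⊓ φ ⊤) = φ ((i' ⊔ i') ⊓ φ ⊤) := h1
      rw [sup_idem, inf_comm i' (φ ⊤), hi'.inf_eq_bot, hφbot] at h2
      rw [sup_inf_assoc_of_le i' (hmono le_top : φ i' ≤ φ ⊤),
        inf_comm i' (φ ⊤), hi'.inf_eq_bot, sup_bot_eq] at h2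
      have hi'k : i' ≤ linKer φ := le_sSup h2
      apply top_le_iff.mp
      calc (⊤ : α) = φ ⊤ ⊔ i' := hi'.sup_eq_top.symm
      _ ≤ linKer φ ⊔ φ ⊤ := sup_le le_sup_right (hi'k.trans le_sup_left)
  · intro hb
    refine ⟨fun φ hφ => ⟨φ ⊤, IsCompl.of_eq (hb φ hφ).1 (hb φ hφ).2⟩,
      fun φ hφ => ⟨linKer φ, (IsCompl.of_eq (hb φ hφ).1 (hb φ hφ).2).symm⟩, ?_⟩
    intro ε hε hidem φ hφ
    obtain ⟨hεmono, hεker, hεshift, -, hεinj, hεsurj⟩ := linmor_props (hM.lin_mem ε hε)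
    obtain ⟨hmono, hker, -, hsup, -, -⟩ := linmor_props (hM.lin_mem φ hφ)
    set k := linKer ε with hkdef
    set i := ε ⊤ with hidef
    have hki : IsCompl k i := IsCompl.of_eq (hb ε hε).1 (hb ε hε).2
    -- ε = proj i k
    have hfix : ∀ y ≤ i, ε y = y := by
      intro y hy
      obtain ⟨z, hz⟩ := hεsurj y hy
      rw [← hz]
      exact congrFun hidem z
    have hle : ∀ z, k ≤ z → ε z ≤ z := by
      intro z hz
      have h1 : ε (ε z ⊔ k) = ε z := by
        rw [← hεshift (ε z)]
        exact congrFun hidem z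
      have h2 : ε z ⊔ k = z := hεinj _ _ le_sup_right hz (by rw [h1, hεshift z, sup_eq_left.mpr hz])
      exact le_sup_left.trans h2.le
    have hεeq : ∀ a, ε a = (a ⊔ k) ⊓ i := by
      intro a
      rw [hεshift a]
      apply le_antisymm
      · exact le_inf (hle _ le_sup_right) (hεmono le_top)
      · calc (a ⊔ k) ⊓ i = ε ((a ⊔ k) ⊓ i) := (hfix _ inf_le_right).symm
        _ ≤ ε (a ⊔ k) := hεmono inf_le_left
    -- key bounds
    have hb1 : ∀ a, φ (proj i k a) ≤ i := phi_proj_le hM hcc hb hφ hki.symm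
    have hb2 : ∀ a, φ (proj k i a) ≤ k := phi_proj_le hM hcc hb hφ hki
    have hφkk : φ k ≤ k := by
      have : proj k i ⊤ = k := by
        show (⊤ ⊔ i) ⊓ k = k
        rw [top_sup_eq, top_inf_eq]
      calc φ k = φ (proj k i ⊤) := by rw [this]
      _ ≤ k := hb2 ⊤
    funext a
    show ε (φ a) = φ (ε a)
    rw [hεeq (φ a), hεeq a]
    apply le_antisymm
    · -- (φ a ⊔ k) ⊓ i ≤ φ ((a ⊔ k) ⊓ i)
      have hdecomp : ((a ⊔ k) ⊓ i) ⊔ ((a ⊔ i) ⊓ k) = (a ⊔ k) ⊓ (a ⊔ i) := by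
        have e1 : (((a ⊔ k) ⊓ i) ⊔ k) ⊓ (a ⊔ i) = ((a ⊔ k) ⊓ i) ⊔ (k ⊓ (a ⊔ i)) :=
          sup_inf_assoc_of_le k (inf_le_right.trans le_sup_right : (a ⊔ k) ⊓ i ≤ a ⊔ i)
        have e2 : ((a ⊔ k) ⊓ i) ⊔ k = a ⊔ k := by
          rw [sup_comm, inf_comm (a ⊔ k) i, ← sup_inf_assoc_of_le i (le_sup_right : k ≤ a ⊔ k),
            hki.sup_eq_top, top_inf_eq]
        rw [e2] at e1
        rw [inf_comm (a ⊔ i) k, ← e1]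
      have ha : a ≤ ((a ⊔ k) ⊓ i) ⊔ ((a ⊔ i) ⊓ k) := by
        rw [hdecomp]; exact le_inf le_sup_left le_sup_left
      have hφa : φ a ≤ φ ((a ⊔ k) ⊓ i) ⊔ k := by
        calc φ a ≤ φ (((a ⊔ k) ⊓ i) ⊔ ((a ⊔ i) ⊓ k)) := hmono ha
        _ = φ ((a ⊔ k) ⊓ i) ⊔ φ ((a ⊔ i) ⊓ k) := hsup _ _
        _ ≤ φ ((a ⊔ k) ⊓ i) ⊔ k := sup_le_sup_left (hb2 a) _
      calc (φ a ⊔ k) ⊓ i ≤ ((φ ((a ⊔ k) ⊓ i) ⊔ k) ⊔ k) ⊓ i :=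
            inf_le_inf_right i (sup_le_sup_right hφa k)
      _ = (φ ((a ⊔ k) ⊓ i) ⊔ k) ⊓ i := by rw [sup_assoc, sup_idem]
      _ = φ ((a ⊔ k) ⊓ i) ⊔ (k ⊓ i) := sup_inf_assoc_of_le k (hb1 a)
      _ = φ ((a ⊔ k) ⊓ i) := by rw [hki.inf_eq_bot, sup_bot_eq]
    · -- φ ((a ⊔ k) ⊓ i) ≤ (φ a ⊔ k) ⊓ i
      apply le_inf
      · calc φ ((a ⊔ k) ⊓ i) ≤ φ (a ⊔ k) := hmono inf_le_left
        _ = φ a ⊔ φ k := hsup a k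
        _ ≤ φ a ⊔ k := sup_le_sup_left hφkk _
      · exact hb1 a
end
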